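/- arXiv:cs/0005001 — 5 statements merged into one kernel-verified Lean document; each statement's English description precedes it below -/
import Mathlib

section
/- Let m_r ≥ 1, m_n ≥ 1, let the noise-concentrated area be the union of B pairwise disjoint m_n × m_n noise-concentrated blocks, so its size is S_c = B·m_n², and fix any offset (a,b) ∈ ℤ². Then the number of region indices attained by cells of the noise-concentrated area is at most B·(⌈m_n/m_r⌉ + 1)²; consequently, the total size S_r = m_r² · (number of noise-contaminated regions) of the noise-contaminated regions satisfies S_r ≤ S_c · (m_r²/m_n²) · (⌈m_n/m_r⌉ + 1)². -/
/-- The region index of a cell `(x, y)` for region side length `m` and offset `(a, b)`: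
`(⌊(x−a)/m⌋, ⌊(y−b)/m⌋)`. -/
def regionIdx (m a b : ℤ) (p : ℤ × ℤ) : ℤ × ℤ :=
  ((p.1 - a).fdiv m, (p.2 - b).fdiv m)

/-- The `mn × mn` noise-concentrated block at position `(u, v)`. -/
noncomputable def noiseBlock (mn u v : ℤ) : Finset (ℤ × ℤ) :=
  Finset.Ico u (u + mn) ×ˢ Finset.Ico v (v + mn)

lemma fdiv_mem_Icc (mr mn K u t : ℤ) (hmr : 1 ≤ mr) (hK : mn ≤ K * mr)
    (h1 : u ≤ t) (h2 : t < u + mn) :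
    t.fdiv mr ∈ Finset.Icc (u.fdiv mr) (u.fdiv mr + K) := by
  have hmr0 : (0:ℤ) < mr := by omega
  rw [Int.fdiv_eq_ediv_of_nonneg _ (le_of_lt hmr0), Int.fdiv_eq_ediv_of_nonneg _ (le_of_lt hmr0)]
  rw [Finset.mem_Icc]
  constructor
  · exact Int.ediv_le_ediv hmr0 h1
  · have h3 : t / mr * mr ≤ t := Int.ediv_mul_le t (ne_of_gt hmr0)
    have h4 : u < (u / mr + 1) * mr := Int.lt_ediv_add_one_mul_self u hmr0
    have h5 : t / mr * mr < (u / mr + K + 1) * mr := by nlinarith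
    have h6 : t / mr < u / mr + K + 1 := lt_of_mul_lt_mul_right h5 (le_of_lt hmr0)
    omega

lemma block_image_card (mr mn a b u v : ℤ) (hmr : 1 ≤ mr) (hmn : 1 ≤ mn) (K : ℤ)
    (hK0 : 0 ≤ K) (hK : mn ≤ K * mr) :
    (((noiseBlock mn u v).image (regionIdx mr a b)).card : ℤ) ≤ (K + 1) ^ 2 := by
  have hsub : (noiseBlock mn u v).image (regionIdx mr a b) ⊆
      Finset.Icc ((u - a).fdiv mr) ((u - a).fdiv mr + K) ×ˢ
      Finset.Icc ((v - b).fdiv mr) ((v - b).fdiv mr + K) := by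
    intro p hp
    simp only [Finset.mem_image] at hp
    obtain ⟨q, hq, rfl⟩ := hp
    simp only [noiseBlock, Finset.mem_product, Finset.mem_Ico] at hq
    simp only [regionIdx, Finset.mem_product]
    constructor
    · exact fdiv_mem_Icc mr mn K (u - a) (q.1 - a) hmr hK (by omega) (by omega)
    · exact fdiv_mem_Icc mr mn K (v - b) (q.2 - b) hmr hK (by omega) (by omega)
  have hcard := Finset.card_le_card hsub
  rw [Finset.card_product, Int.card_Icc, Int.card_Icc] at hcard
  have h1 : ((u - a).fdiv mr + K + 1 - (u - a).fdiv mr).toNat = K.toNat + 1 := by omega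
  have h2 : ((v - b).fdiv mr + K + 1 - (v - b).fdiv mr).toNat = K.toNat + 1 := by omega
  rw [h1, h2] at hcard
  have : ((noiseBlock mn u v).image (regionIdx mr a b)).card ≤ (K.toNat + 1) * (K.toNat + 1) :=
    hcard
  have := (Int.ofNat_le.mpr this)
  push_cast at this
  calc (((noiseBlock mn u v).image (regionIdx mr a b)).card : ℤ)
      ≤ (K.toNat + 1 : ℤ) * (K.toNat + 1 : ℤ) := this
    _ = (K + 1) ^ 2 := by rw [Int.toNat_of_nonneg hK0]; ring

/-- Theorem 1, item 1: if the noise-concentrated area is the union of `B` pairwise disjoint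
`m_n × m_n` blocks (so `S_c = B·m_n²`), then for any offset the number of noise-contaminated
regions is at most `B·(⌈m_n/m_r⌉ + 1)²`, hence the total size
`S_r = m_r² · (number of contaminated regions)` satisfies
`S_r ≤ S_c · (m_r²/m_n²) · (⌈m_n/m_r⌉ + 1)²`. -/
theorem contaminated_regions_bound (mr mn : ℤ) (hmr : 1 ≤ mr) (hmn : 1 ≤ mn)
    (B : ℕ) (pos : Fin B → ℤ × ℤ)
    (hdisj : ∀ i j : Fin B, i ≠ j →
      Disjoint (noiseBlock mn (pos i).1 (pos i).2) (noiseBlock mn (pos j).1 (pos j).2))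
    (area : Finset (ℤ × ℤ))
    (harea : area = Finset.univ.biUnion (fun i : Fin B => noiseBlock mn (pos i).1 (pos i).2))
    (Sc : ℤ) (hSc : Sc = (B : ℤ) * mn ^ 2)
    (a b : ℤ)
    (Sr : ℤ) (hSr : Sr = mr ^ 2 * ((area.image (regionIdx mr a b)).card : ℤ)) :
    ((area.image (regionIdx mr a b)).card : ℤ) ≤ (B : ℤ) * (⌈(mn : ℚ) / (mr : ℚ)⌉ + 1) ^ 2 ∧
    (Sr : ℚ) ≤ (Sc : ℚ) * ((mr : ℚ) ^ 2 / (mn : ℚ) ^ 2) * ((⌈(mn : ℚ) / (mr : ℚ)⌉ : ℚ) + 1) ^ 2 := by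
  set K : ℤ := ⌈(mn : ℚ) / (mr : ℚ)⌉ with hKdef
  have hmrQ : (0:ℚ) < (mr:ℚ) := by exact_mod_cast (by omega : (0:ℤ) < mr)
  have hKQ : (mn : ℚ) / (mr : ℚ) ≤ (K : ℚ) := Int.le_ceil _
  have hK : mn ≤ K * mr := by
    have := (div_le_iff₀ hmrQ).mp hKQ
    exact_mod_cast this
  have hK0 : 0 ≤ K := by
    have : (0:ℚ) < (mn:ℚ) / (mr:ℚ) := by
      apply div_pos _ hmrQ
      exact_mod_cast (by omega : (0:ℤ) < mn)
    positivity
  have hmain : ((area.image (regionIdx mr a b)).card : ℤ) ≤ (B : ℤ) * (K + 1) ^ 2 := by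
    rw [harea, Finset.biUnion_image]
    calc ((Finset.univ.biUnion fun i : Fin B =>
            (noiseBlock mn (pos i).1 (pos i).2).image (regionIdx mr a b)).card : ℤ)
        ≤ (∑ i : Fin B, ((noiseBlock mn (pos i).1 (pos i).2).image (regionIdx mr a b)).card : ℤ) := by
          exact_mod_cast Int.ofNat_le.mpr (Finset.card_biUnion_le)
      _ = ∑ i : Fin B, (((noiseBlock mn (pos i).1 (pos i).2).image (regionIdx mr a b)).card : ℤ) := by
          push_cast; ring
      _ ≤ ∑ _i : Fin B, (K + 1) ^ 2 := by
          apply Finset.sum_le_sum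
          intro i _
          exact block_image_card mr mn a b _ _ hmr hmn K hK0 hK
      _ = (B : ℤ) * (K + 1) ^ 2 := by
          rw [Finset.sum_const, Finset.card_univ, Fintype.card_fin]; push_cast; ring
  refine ⟨hmain, ?_⟩
  have hmnQ : ((mn:ℚ))^2 ≠ 0 := by positivity
  have : (Sc : ℚ) * ((mr : ℚ) ^ 2 / (mn : ℚ) ^ 2) * ((K:ℚ) + 1) ^ 2
      = (B : ℚ) * (mr:ℚ)^2 * ((K:ℚ) + 1) ^ 2 := by
    rw [hSc]; push_cast; field_simp
  rw [this, hSr]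
  push_cast
  have hmainQ : ((area.image (regionIdx mr a b)).card : ℚ) ≤ (B : ℚ) * ((K:ℚ) + 1) ^ 2 := by
    exact_mod_cast hmain
  nlinarith [sq_nonneg ((mr:ℚ)), hmrQ]
end

section
/- For all integers m_r ≥ 1 and m_n ≥ 1 and every block position (u,v) ∈ ℤ², the sum over all m_r² shifts (a,b) ∈ {0,…,m_r−1}² of the number of distinct region indices attained by the m_n × m_n noise-concentrated block at (u,v) under offset (a,b) equals (m_n + m_r − 1)². -/
private lemma ediv_shift (m t a : ℤ) (hm : 1 ≤ m) (ha : 0 ≤ a) (ha' : a < m) :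
    (t - a) / m = t / m - (if t % m < a then 1 else 0) := by
  have hq := Int.mul_ediv_add_emod t m
  have hr0 : 0 ≤ t % m := Int.emod_nonneg t (by omega)
  have hrm : t % m < m := Int.emod_lt_of_pos t (by omega)
  set q := t / m with hqdef
  set r := t % m with hrdef
  have ht : t - a = (r - a) + m * q := by omega
  rw [ht, Int.add_mul_ediv_left _ _ (by omega : m ≠ 0)]
  by_cases h : r < a
  · have h2 : (r - a + m * 1) / m = (r - a) / m + 1 :=
      Int.add_mul_ediv_left (r - a) 1 (by omega : m ≠ 0)
    have h1 : (r - a + m * 1) / m = 0 := Int.ediv_eq_zero_of_lt (by omega) (by omega)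
    simp only [h, if_pos]
    omega
  · have h1 : (r - a) / m = 0 := Int.ediv_eq_zero_of_lt (by omega) (by omega)
    simp only [h, if_neg, not_false_iff]
    omega

private lemma sum_ediv (m t : ℤ) (hm : 1 ≤ m) :
    ∑ a ∈ Finset.Ico (0 : ℤ) m, (t - a) / m = t - m + 1 := by
  have hq := Int.mul_ediv_add_emod t m
  have hr0 : 0 ≤ t % m := Int.emod_nonneg t (by omega)
  have hrm : t % m < m := Int.emod_lt_of_pos t (by omega)
  have hcongr : ∑ a ∈ Finset.Ico (0 : ℤ) m, (t - a) / m
      = ∑ a ∈ Finset.Ico (0 : ℤ) m, (t / m - (if t % m < a then 1 else 0)) := by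
    apply Finset.sum_congr rfl
    intro a ha
    rw [Finset.mem_Ico] at ha
    exact ediv_shift m t a hm ha.1 ha.2
  rw [hcongr, Finset.sum_sub_distrib, Finset.sum_const, Finset.sum_boole]
  have hfil : (Finset.Ico (0 : ℤ) m).filter (fun a => t % m < a) = Finset.Ioo (t % m) m := by
    ext x
    simp only [Finset.mem_filter, Finset.mem_Ico, Finset.mem_Ioo]
    omega
  rw [hfil, Int.card_Ioo, Int.card_Ico]
  have h1 : ((m - 0).toNat : ℤ) = m := by omega
  have h2 : ((m - t % m - 1).toNat : ℤ) = m - t % m - 1 := by omega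
  rw [nsmul_eq_mul, h1, h2]
  linarith

private lemma image_ediv_Ico (m a u n : ℤ) (hm : 1 ≤ m) (hn : 1 ≤ n) :
    (Finset.Ico u (u + n)).image (fun x => (x - a) / m) =
      Finset.Icc ((u - a) / m) ((u + n - 1 - a) / m) := by
  ext q
  simp only [Finset.mem_image, Finset.mem_Ico, Finset.mem_Icc]
  constructor
  · rintro ⟨x, ⟨hx1, hx2⟩, rfl⟩
    exact ⟨Int.ediv_le_ediv (by omega) (by omega), Int.ediv_le_ediv (by omega) (by omega)⟩
  · rintro ⟨h1, h2⟩
    have hqm : q * m ≤ u + n - 1 - a := (Int.le_ediv_iff_mul_le (by omega)).mp h2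
    have h3 : u - a < ((u - a) / m + 1) * m := Int.lt_ediv_add_one_mul_self _ (by omega)
    have h4 : ((u - a) / m + 1) * m ≤ (q + 1) * m :=
      mul_le_mul_of_nonneg_right (by omega) (by omega)
    have h5 : u - a < q * m + m := by
      have := lt_of_lt_of_le h3 h4
      rw [add_mul, one_mul] at this
      linarith
    refine ⟨max u (a + q * m), ⟨le_max_left _ _, ?_⟩, ?_⟩
    · apply max_lt <;> linarith
    · have hlow : a + q * m ≤ max u (a + q * m) := le_max_right _ _
      have hup : max u (a + q * m) ≤ a + q * m + m - 1 := by
        apply max_le <;> linarith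
    -- (x - a)/m = q
      set x := max u (a + q * m)
      rw [show x - a = (x - a - m * q) + m * q by ring,
        Int.add_mul_ediv_left _ _ (by omega : m ≠ 0),
        Int.ediv_eq_zero_of_lt (by linarith) (by linarith)]
      ring

private lemma image_prod_map {s t : Finset ℤ} (f g : ℤ → ℤ) :
    (s ×ˢ t).image (fun p => (f p.1, g p.2)) = s.image f ×ˢ t.image g := by
  ext ⟨p, q⟩
  simp [Finset.mem_image, Prod.ext_iff]
  aesop

/-- Key counting claim in the proof of Theorem 2: summed over all `m_r²` shifts of the
partition into `m_r × m_r` square regions, an `m_n × m_n` noise-concentrated block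
contaminates a total of `(m_n + m_r − 1)²` regions. -/
theorem sum_over_shifts_of_contaminated_regions (mr mn : ℤ) (hmr : 1 ≤ mr) (hmn : 1 ≤ mn)
    (u v : ℤ) :
    (∑ ab ∈ Finset.Ico (0 : ℤ) mr ×ˢ Finset.Ico (0 : ℤ) mr,
      (((noiseBlock mn u v).image (regionIdx mr ab.1 ab.2)).card : ℤ))
      = (mn + mr - 1) ^ 2 := by
  have hmr0 : (0 : ℤ) ≤ mr := by omega
  -- pointwise card formula
  have hcard : ∀ a b : ℤ, (((noiseBlock mn u v).image (regionIdx mr a b)).card : ℤ)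
      = ((u + mn - 1 - a) / mr - (u - a) / mr + 1) *
        ((v + mn - 1 - b) / mr - (v - b) / mr + 1) := by
    intro a b
    have himg : (noiseBlock mn u v).image (regionIdx mr a b)
        = Finset.Icc ((u - a) / mr) ((u + mn - 1 - a) / mr) ×ˢ
          Finset.Icc ((v - b) / mr) ((v + mn - 1 - b) / mr) := by
      have : regionIdx mr a b = fun p : ℤ × ℤ => ((p.1 - a) / mr, (p.2 - b) / mr) := by
        funext p
        simp [regionIdx, Int.fdiv_eq_ediv_of_nonneg _ hmr0]
      rw [noiseBlock, this, image_prod_map (fun x => (x - a) / mr) (fun y => (y - b) / mr),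
        image_ediv_Ico mr a u mn hmr hmn, image_ediv_Ico mr b v mn hmr hmn]
    have hx : (u - a) / mr ≤ (u + mn - 1 - a) / mr := Int.ediv_le_ediv (by omega) (by omega)
    have hy : (v - b) / mr ≤ (v + mn - 1 - b) / mr := Int.ediv_le_ediv (by omega) (by omega)
    rw [himg, Finset.card_product, Int.card_Icc, Int.card_Icc]
    push_cast [Int.toNat_of_nonneg (by omega : (0:ℤ) ≤ (u + mn - 1 - a) / mr + 1 - (u - a) / mr),
      Int.toNat_of_nonneg (by omega : (0:ℤ) ≤ (v + mn - 1 - b) / mr + 1 - (v - b) / mr)]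
    ring
  -- 1D sum
  have hsum : ∀ w : ℤ, ∑ a ∈ Finset.Ico (0 : ℤ) mr,
      ((w + mn - 1 - a) / mr - (w - a) / mr + 1) = mn + mr - 1 := by
    intro w
    have e1 := sum_ediv mr (w + mn - 1) hmr
    have e2 := sum_ediv mr w hmr
    have : ∑ a ∈ Finset.Ico (0 : ℤ) mr, ((w + mn - 1 - a) / mr - (w - a) / mr + 1)
        = (∑ a ∈ Finset.Ico (0 : ℤ) mr, (w + mn - 1 - a) / mr)
          - (∑ a ∈ Finset.Ico (0 : ℤ) mr, (w - a) / mr)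
          + (Finset.Ico (0 : ℤ) mr).card := by
      rw [Finset.sum_add_distrib, Finset.sum_sub_distrib, Finset.sum_const, nsmul_eq_mul,
        mul_one]
    rw [this, e1, e2, Int.card_Ico]
    omega
  calc (∑ ab ∈ Finset.Ico (0 : ℤ) mr ×ˢ Finset.Ico (0 : ℤ) mr,
        (((noiseBlock mn u v).image (regionIdx mr ab.1 ab.2)).card : ℤ))
      = ∑ a ∈ Finset.Ico (0 : ℤ) mr, ∑ b ∈ Finset.Ico (0 : ℤ) mr,
          ((u + mn - 1 - a) / mr - (u - a) / mr + 1) *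
          ((v + mn - 1 - b) / mr - (v - b) / mr + 1) := by
        rw [Finset.sum_product]
        exact Finset.sum_congr rfl fun a _ => Finset.sum_congr rfl fun b _ => hcard a b
    _ = (∑ a ∈ Finset.Ico (0 : ℤ) mr, ((u + mn - 1 - a) / mr - (u - a) / mr + 1)) *
        (∑ b ∈ Finset.Ico (0 : ℤ) mr, ((v + mn - 1 - b) / mr - (v - b) / mr + 1)) :=
        (Finset.sum_mul_sum _ _ _ _).symm
    _ = (mn + mr - 1) ^ 2 := by rw [hsum u, hsum v]; ring
end

section
/- Assume m_n ≤ L − m_r and m_n ≤ M − m_r. Let v and v' be votings of the nation such that under v, for every shift (a,b) ∈ {0,…,m_r−1}², candidate A receives strictly more votes than B in every region of the shifted partition. Suppose every cell where v' differs from v lies in the union of B_blk pairwise disjoint m_n × m_n noise-concentrated blocks contained in the nation, and set S_c = B_blk·m_n². If S_c < (m_n/(m_r + m_n − 1))² · (N/2), then there exists a shift (a,b) ∈ {0,…,m_r−1}² such that under the corresponding shifted partition, candidate A wins strictly more than half of the K regions under v', i.e. regional voting with that partition still selects A. -/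
/-- The nation: the set of cells `{0,…,L−1} × {0,…,M−1} ⊆ ℤ²`. -/
noncomputable def nation (L M : ℤ) : Finset (ℤ × ℤ) :=
  Finset.Ico 0 L ×ˢ Finset.Ico 0 M

/-- The region index of a cell `(x, y)` of the `L × M` toroidal nation, under the partition
into `m × m` squares shifted by `(a, b)` (with wrap-around):
`(⌊((x−a) mod L)/m⌋, ⌊((y−b) mod M)/m⌋)`. -/
def regionIdxT (L M m a b : ℤ) (p : ℤ × ℤ) : ℤ × ℤ :=
  (((p.1 - a) % L).fdiv m, ((p.2 - b) % M).fdiv m)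

/-- The number of votes that candidate `c` (`true` = A, `false` = B) receives in the region
with index `r` of the `(a,b)`-shifted partition, under voting `v`. -/
noncomputable def votesIn (L M mr a b : ℤ) (v : ℤ × ℤ → Bool) (r : ℤ × ℤ) (c : Bool) : ℕ :=
  ((nation L M).filter (fun p => regionIdxT L M mr a b p = r ∧ v p = c)).card

/-- The image of a noise block under the region-index map is a product of 1-D images. -/
lemma image_region_block (L M mr a b mn u v : ℤ) :
    (noiseBlock mn u v).image (regionIdxT L M mr a b) =
      ((Finset.Ico u (u + mn)).image (fun x => ((x - a) % L).fdiv mr)) ×ˢ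
      ((Finset.Ico v (v + mn)).image (fun y => ((y - b) % M).fdiv mr)) := by
  ext ⟨c, d⟩
  simp only [noiseBlock, regionIdxT, Finset.mem_image, Finset.mem_product, Prod.mk.injEq]
  constructor
  · rintro ⟨⟨x, y⟩, ⟨hx, hy⟩, h1, h2⟩
    exact ⟨⟨x, hx, h1⟩, ⟨y, hy, h2⟩⟩
  · rintro ⟨⟨x, hx, h1⟩, ⟨y, hy, h2⟩⟩
    exact ⟨(x, y), ⟨hx, hy⟩, h1, h2⟩

/-- Basic facts about the 1-D region index of a cell. -/
lemma idx_facts (L mr a x : ℤ) (hL : 0 < L) (hmr : 1 ≤ mr) (hdL : mr ∣ L) :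
    0 ≤ ((x - a) % L).fdiv mr ∧ ((x - a) % L).fdiv mr < L / mr := by
  set y := (x - a) % L with hy
  have hy0 : 0 ≤ y := Int.emod_nonneg _ (by omega)
  have hyL : y < L := Int.emod_lt_of_pos _ hL
  rw [Int.fdiv_eq_ediv_of_nonneg _ (by omega)]
  have hj0 : 0 ≤ y / mr := Int.ediv_nonneg hy0 (by omega)
  refine ⟨hj0, ?_⟩
  obtain ⟨k, hk⟩ := hdL
  have hkdiv : L / mr = k := by rw [hk, Int.mul_ediv_cancel_left _ (by omega)]
  rw [hkdiv]
  have h1 : y / mr * mr ≤ y := Int.ediv_mul_le y (by omega)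
  by_contra hc
  push_neg at hc
  have : k * mr ≤ y / mr * mr := by
    apply mul_le_mul_of_nonneg_right hc (by omega)
  nlinarith [hk]

/-- The 1-D region index is surjective onto `[0, L/mr)`. -/
lemma idx_surj (L mr a j : ℤ) (hL : 0 < L) (hmr : 1 ≤ mr) (hdL : mr ∣ L)
    (hj : 0 ≤ j) (hjk : j < L / mr) :
    ∃ x, 0 ≤ x ∧ x < L ∧ ((x - a) % L).fdiv mr = j := by
  obtain ⟨k, hk⟩ := hdL
  have hkdiv : L / mr = k := by rw [hk, Int.mul_ediv_cancel_left _ (by omega)]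
  rw [hkdiv] at hjk
  have hjm : 0 ≤ j * mr := by positivity
  have hjm2 : j * mr + mr ≤ L := by nlinarith
  refine ⟨(j * mr + a) % L, Int.emod_nonneg _ (by omega), Int.emod_lt_of_pos _ hL, ?_⟩
  have h1 : ((j * mr + a) % L - a) % L = (j * mr + a - a) % L := by
    conv_rhs => rw [Int.sub_emod]
    rw [Int.sub_emod, Int.emod_emod_of_dvd _ dvd_rfl]
  have h2 : j * mr + a - a = j * mr := by ring
  rw [h1, h2, Int.emod_eq_of_lt hjm (by omega), Int.mul_fdiv_cancel _ (by omega)]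

/-- The image of the nation under the shifted region-index map is exactly the full index grid. -/
lemma image_nation (L M mr a b : ℤ) (hL : 0 < L) (hM : 0 < M) (hmr : 1 ≤ mr)
    (hdL : mr ∣ L) (hdM : mr ∣ M) :
    (nation L M).image (regionIdxT L M mr a b) =
      Finset.Ico 0 (L / mr) ×ˢ Finset.Ico 0 (M / mr) := by
  ext ⟨r1, r2⟩
  simp only [Finset.mem_image, Finset.mem_product, Finset.mem_Ico, nation, regionIdxT,
    Prod.mk.injEq]
  constructor
  · rintro ⟨⟨x, y⟩, hp, h1, h2⟩
    obtain ⟨hx1, hx2⟩ := idx_facts L mr a x hL hmr hdL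
    obtain ⟨hy1, hy2⟩ := idx_facts M mr b y hM hmr hdM
    simp only at h1 h2
    rw [← h1, ← h2]
    exact ⟨⟨hx1, hx2⟩, ⟨hy1, hy2⟩⟩
  · rintro ⟨⟨h1, h2⟩, ⟨h3, h4⟩⟩
    obtain ⟨x, hx0, hxL, hx⟩ := idx_surj L mr a r1 hL hmr hdL h1 h2
    obtain ⟨y, hy0, hyM, hy⟩ := idx_surj M mr b r2 hM hmr hdM h3 h4
    exact ⟨(x, y), by simp [Finset.mem_product, Finset.mem_Ico]; omega, hx, hy⟩

/-- 1-D core counting lemma: summed over all `mr` shifts, a length-`mn` interval inside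
`[0, L)` meets at most `mr + mn − 1` region intervals in total. -/
lemma oneDimSum (L mr mn u : ℤ) (hL : 0 < L) (hmr : 1 ≤ mr) (hmn : 1 ≤ mn)
    (hdL : mr ∣ L) (hu : 0 ≤ u) (huL : u + mn ≤ L) :
    (∑ a ∈ Finset.Ico (0:ℤ) mr,
      (((Finset.Ico u (u + mn)).image (fun x => ((x - a) % L).fdiv mr)).card : ℤ))
      ≤ mr + mn - 1 := by
  set t : ℤ → Finset ℤ := fun a => (Finset.Ico u (u + mn)).image (fun x => ((x - a) % L).fdiv mr)
    with ht
  have hcard : ∑ a ∈ Finset.Ico (0:ℤ) mr, (t a).card = ((Finset.Ico (0:ℤ) mr).sigma t).card :=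
    (Finset.card_sigma _ _).symm
  set T : Finset ℤ := (Finset.Ico (u - mr + 1) (u + mn)).image (fun w => w % L) with hT
  have hTcard : (T.card : ℤ) ≤ mr + mn - 1 := by
    calc (T.card : ℤ) ≤ ((Finset.Ico (u - mr + 1) (u + mn)).card : ℤ) := by
          exact_mod_cast Finset.card_image_le
      _ = ((u + mn - (u - mr + 1)).toNat : ℤ) := by rw [Int.card_Ico]
      _ ≤ mr + mn - 1 := by rw [Int.toNat_of_nonneg (by omega)]; omega
  have hinj : ((Finset.Ico (0:ℤ) mr).sigma t).card ≤ T.card := by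
    apply Finset.card_le_card_of_injOn (fun q => q.1 + q.2 * mr)
    · intro q hq
      rw [Finset.mem_coe, Finset.mem_sigma, Finset.mem_Ico] at hq
      obtain ⟨⟨ha0, ham⟩, hj⟩ := hq
      rw [ht] at hj
      simp only [Finset.mem_image, Finset.mem_Ico] at hj
      obtain ⟨x, ⟨hx1, hx2⟩, hjx⟩ := hj
      set y := (x - q.1) % L with hy
      have hy0 : 0 ≤ y := Int.emod_nonneg _ (by omega)
      have hyL : y < L := Int.emod_lt_of_pos _ hL
      have hfd : y.fdiv mr = y / mr := Int.fdiv_eq_ediv_of_nonneg _ (by omega)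
      have hq2 : q.2 = y / mr := by rw [← hjx, hfd]
      have hmod : y % mr + mr * (y / mr) = y := Int.emod_add_mul_ediv y mr
      have htt0 : 0 ≤ y % mr := Int.emod_nonneg _ (by omega)
      have httm : y % mr < mr := Int.emod_lt_of_pos _ (by omega)
      have hj0 : 0 ≤ y / mr := Int.ediv_nonneg hy0 (by omega)
      have hjy : y / mr * mr ≤ y := Int.ediv_mul_le y (by omega)
      -- the region start s = q.1 + (y/mr)*mr satisfies 0 ≤ s < L
      have hsL : q.1 + y / mr * mr < L := by
        have hdvd : mr ∣ L - y / mr * mr := by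
          exact dvd_sub hdL (dvd_mul_left mr (y / mr))
        have : mr ≤ L - y / mr * mr := Int.le_of_dvd (by omega) hdvd
        omega
      have hs0 : 0 ≤ q.1 + y / mr * mr := by positivity
      -- congruence: (x - y % mr) ≡ q.1 + (y/mr)*mr  (mod L)
      rw [hT, Finset.mem_coe, Finset.mem_image]
      refine ⟨x - y % mr, by rw [Finset.mem_Ico]; omega, ?_⟩
      have m1 : x - q.1 ≡ y [ZMOD L] := by
        show (x - q.1) % L = y % L
        rw [← hy, Int.emod_emod_of_dvd _ dvd_rfl]
      have m2 := m1.add_right (q.1 - y % mr)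
      have e1 : x - q.1 + (q.1 - y % mr) = x - y % mr := by ring
      have e2 : y + (q.1 - y % mr) = q.1 + y / mr * mr := by linear_combination -hmod
      rw [e1, e2] at m2
      have : (x - y % mr) % L = (q.1 + y / mr * mr) % L := m2
      rw [this, Int.emod_eq_of_lt hs0 hsL]; show _ = q.1 + q.2 * mr; rw [hq2]
    · rintro ⟨a, j⟩ hq ⟨a', j'⟩ hq' heq
      simp only [Finset.coe_sigma, Set.mem_sigma_iff, Finset.mem_coe, Finset.mem_Ico] at hq hq'
      simp only at heq
      have hdvd : (mr : ℤ) ∣ a' - a := ⟨j - j', by linear_combination -heq⟩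
      have h0 : a' - a = 0 := Int.eq_zero_of_abs_lt_dvd hdvd (by rw [abs_lt]; omega)
      have ha : a = a' := by omega
      have hj : j = j' := by
        have : j * mr = j' * mr := by omega
        exact mul_right_cancel₀ (by omega) this
      subst ha; subst hj; rfl
  have : ((((Finset.Ico (0:ℤ) mr).sigma t).card : ℕ) : ℤ) ≤ (T.card : ℤ) := by exact_mod_cast hinj
  calc (∑ a ∈ Finset.Ico (0:ℤ) mr, ((t a).card : ℤ))
      = (((Finset.Ico (0:ℤ) mr).sigma t).card : ℤ) := by rw [← hcard]; push_cast; ring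
    _ ≤ (T.card : ℤ) := this
    _ ≤ mr + mn - 1 := hTcard

/-- Summed over all `mr × mr` shifts, one `mn × mn` block meets at most `(mr+mn-1)²`
regions in total. -/
lemma blockShiftSum (L M mr mn u v : ℤ) (hL : 0 < L) (hM : 0 < M)
    (hmr : 1 ≤ mr) (hmn : 1 ≤ mn) (hdL : mr ∣ L) (hdM : mr ∣ M)
    (hu0 : 0 ≤ u) (huL : u + mn ≤ L) (hv0 : 0 ≤ v) (hvM : v + mn ≤ M) :
    ∑ ab ∈ Finset.Ico (0:ℤ) mr ×ˢ Finset.Ico (0:ℤ) mr,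
      (((noiseBlock mn u v).image (regionIdxT L M mr ab.1 ab.2)).card : ℤ)
      ≤ (mr + mn - 1) ^ 2 := by
  have hrw : ∀ ab : ℤ × ℤ,
      (((noiseBlock mn u v).image (regionIdxT L M mr ab.1 ab.2)).card : ℤ)
      = (((Finset.Ico u (u + mn)).image (fun x => ((x - ab.1) % L).fdiv mr)).card : ℤ) *
        (((Finset.Ico v (v + mn)).image (fun y => ((y - ab.2) % M).fdiv mr)).card : ℤ) := by
    intro ab
    rw [image_region_block, Finset.card_product]
    push_cast; ring
  have hcongr := Finset.sum_congr rfl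
    (fun ab (_ : ab ∈ Finset.Ico (0:ℤ) mr ×ˢ Finset.Ico (0:ℤ) mr) => hrw ab)
  rw [hcongr, Finset.sum_product]
  have h1 := oneDimSum L mr mn u hL hmr hmn hdL hu0 huL
  have h2 := oneDimSum M mr mn v hM hmr hmn hdM hv0 hvM
  have h3 : (0:ℤ) ≤ ∑ bb ∈ Finset.Ico (0:ℤ) mr,
      (((Finset.Ico v (v + mn)).image (fun y => ((y - bb) % M).fdiv mr)).card : ℤ) :=
    Finset.sum_nonneg fun _ _ => Int.natCast_nonneg _
  have key : (∑ aa ∈ Finset.Ico (0:ℤ) mr,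
      (((Finset.Ico u (u + mn)).image (fun x => ((x - aa) % L).fdiv mr)).card : ℤ)) *
      (∑ bb ∈ Finset.Ico (0:ℤ) mr,
      (((Finset.Ico v (v + mn)).image (fun y => ((y - bb) % M).fdiv mr)).card : ℤ))
      ≤ (mr + mn - 1) ^ 2 := by
    rw [pow_two]
    exact mul_le_mul h1 h2 h3 (by omega)
  rw [Finset.sum_mul_sum] at key
  exact key

/-- Theorem 2, item 2: if A wins every region of every shifted partition under `v`, and all
cells where `v'` differs from `v` lie in a union of pairwise disjoint `m_n × m_n` blocks of
total size `S_c < (m_n/(m_r + m_n − 1))² · N/2`, then for some shift `(a,b)` the regional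
voting with the corresponding shifted partition still selects A under `v'`. -/
theorem shifted_regional_voting_retains_A (L M mr mn : ℤ)
    (hL : 0 < L) (hM : 0 < M) (hmr : 1 ≤ mr) (hmn : 1 ≤ mn)
    (hdL : mr ∣ L) (hdM : mr ∣ M)
    (hnL : mn ≤ L - mr) (hnM : mn ≤ M - mr)
    (v v' : ℤ × ℤ → Bool)
    (hAwins : ∀ a b : ℤ, 0 ≤ a → a < mr → 0 ≤ b → b < mr →
      ∀ r ∈ (nation L M).image (regionIdxT L M mr a b),
        votesIn L M mr a b v r false < votesIn L M mr a b v r true)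
    (Bblk : ℕ) (pos : Fin Bblk → ℤ × ℤ)
    (hdisj : ∀ i j : Fin Bblk, i ≠ j →
      Disjoint (noiseBlock mn (pos i).1 (pos i).2) (noiseBlock mn (pos j).1 (pos j).2))
    (hsub : ∀ i : Fin Bblk, noiseBlock mn (pos i).1 (pos i).2 ⊆ nation L M)
    (hdiff : ∀ p, v' p ≠ v p →
      p ∈ Finset.univ.biUnion (fun i : Fin Bblk => noiseBlock mn (pos i).1 (pos i).2))
    (Sc : ℤ) (hSc : Sc = (Bblk : ℤ) * mn ^ 2)
    (hnoise : (Sc : ℚ) < ((mn : ℚ) / ((mr : ℚ) + (mn : ℚ) - 1)) ^ 2 *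
      (((L : ℚ) * (M : ℚ)) / 2)) :
    ∃ a b : ℤ, 0 ≤ a ∧ a < mr ∧ 0 ≤ b ∧ b < mr ∧
      ((nation L M).image (regionIdxT L M mr a b)).card <
        2 * (((nation L M).image (regionIdxT L M mr a b)).filter
          (fun r => votesIn L M mr a b v' r false < votesIn L M mr a b v' r true)).card := by
  classical
  set D := Finset.univ.biUnion (fun i : Fin Bblk => noiseBlock mn (pos i).1 (pos i).2) with hD
  set K : ℤ := (L / mr) * (M / mr) with hK
  -- block coordinate bounds
  have hblk : ∀ i : Fin Bblk, 0 ≤ (pos i).1 ∧ (pos i).1 + mn ≤ L ∧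
      0 ≤ (pos i).2 ∧ (pos i).2 + mn ≤ M := by
    intro i
    have h1 := hsub i (show ((pos i).1, (pos i).2) ∈ noiseBlock mn (pos i).1 (pos i).2 by
      simp [noiseBlock, Finset.mem_product, Finset.mem_Ico]; omega)
    have h2 := hsub i (show ((pos i).1 + mn - 1, (pos i).2 + mn - 1) ∈
        noiseBlock mn (pos i).1 (pos i).2 by
      simp [noiseBlock, Finset.mem_product, Finset.mem_Ico]; omega)
    simp only [nation, Finset.mem_product, Finset.mem_Ico] at h1 h2
    omega
  -- arithmetic: 2 * Bblk * (mr + mn - 1)^2 < L * M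
  have harith : 2 * (Bblk : ℤ) * (mr + mn - 1) ^ 2 < L * M := by
    have hdq : (0:ℚ) < (mr:ℚ) + mn - 1 := by
      have h1 : (1:ℚ) ≤ (mr:ℚ) := by exact_mod_cast hmr
      have h2 : (1:ℚ) ≤ (mn:ℚ) := by exact_mod_cast hmn
      linarith
    have hmq : (0:ℚ) < (mn:ℚ) ^ 2 := by
      have h2 : (1:ℚ) ≤ (mn:ℚ) := by exact_mod_cast hmn
      nlinarith
    rw [hSc] at hnoise
    push_cast at hnoise
    rw [div_pow] at hnoise
    have key : (Bblk:ℚ) * (mn:ℚ)^2 * (2 * ((mr:ℚ) + mn - 1)^2) <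
        (mn:ℚ)^2 / ((mr:ℚ) + mn - 1)^2 * ((L:ℚ) * M / 2) * (2 * ((mr:ℚ) + mn - 1)^2) := by
      apply mul_lt_mul_of_pos_right hnoise (by positivity)
    have hrhs : (mn:ℚ)^2 / ((mr:ℚ) + mn - 1)^2 * ((L:ℚ) * M / 2) * (2 * ((mr:ℚ) + mn - 1)^2)
        = (mn:ℚ)^2 * ((L:ℚ) * M) := by
      field_simp
    rw [hrhs] at key
    have hlhs : (Bblk:ℚ) * (mn:ℚ)^2 * (2 * ((mr:ℚ) + mn - 1)^2)
        = (mn:ℚ)^2 * (2 * (Bblk:ℚ) * ((mr:ℚ) + mn - 1)^2) := by ring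
    rw [hlhs] at key
    have hfin : 2 * (Bblk:ℚ) * ((mr:ℚ) + mn - 1)^2 < (L:ℚ) * M :=
      lt_of_mul_lt_mul_left (by linarith [key]) (le_of_lt hmq)
    exact_mod_cast hfin
  -- sum over shifts of touched-region counts
  set S : Finset (ℤ × ℤ) := Finset.Ico (0:ℤ) mr ×ˢ Finset.Ico (0:ℤ) mr with hS
  have hbound : ∑ ab ∈ S, ((D.image (regionIdxT L M mr ab.1 ab.2)).card : ℤ)
      ≤ (Bblk : ℤ) * (mr + mn - 1) ^ 2 := by
    have step1 : ∀ ab : ℤ × ℤ, ((D.image (regionIdxT L M mr ab.1 ab.2)).card : ℤ)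
        ≤ ∑ i : Fin Bblk,
          (((noiseBlock mn (pos i).1 (pos i).2).image (regionIdxT L M mr ab.1 ab.2)).card : ℤ) := by
      intro ab
      rw [hD, Finset.biUnion_image]
      calc ((Finset.univ.biUnion (fun i : Fin Bblk =>
              (noiseBlock mn (pos i).1 (pos i).2).image (regionIdxT L M mr ab.1 ab.2))).card : ℤ)
          ≤ ((∑ i : Fin Bblk,
              ((noiseBlock mn (pos i).1 (pos i).2).image (regionIdxT L M mr ab.1 ab.2)).card : ℕ) : ℤ) := by
            exact_mod_cast Finset.card_biUnion_le
        _ = _ := by push_cast; ring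
    calc ∑ ab ∈ S, ((D.image (regionIdxT L M mr ab.1 ab.2)).card : ℤ)
        ≤ ∑ ab ∈ S, ∑ i : Fin Bblk,
            (((noiseBlock mn (pos i).1 (pos i).2).image (regionIdxT L M mr ab.1 ab.2)).card : ℤ) :=
          Finset.sum_le_sum (fun ab _ => step1 ab)
      _ = ∑ i : Fin Bblk, ∑ ab ∈ S,
            (((noiseBlock mn (pos i).1 (pos i).2).image (regionIdxT L M mr ab.1 ab.2)).card : ℤ) :=
          Finset.sum_comm
      _ ≤ ∑ _i : Fin Bblk, (mr + mn - 1) ^ 2 := by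
          apply Finset.sum_le_sum
          intro i _
          obtain ⟨hu0, huL, hv0, hvM⟩ := hblk i
          rw [hS]
          exact blockShiftSum L M mr mn (pos i).1 (pos i).2 hL hM hmr hmn hdL hdM hu0 huL hv0 hvM
      _ = (Bblk : ℤ) * (mr + mn - 1) ^ 2 := by
          rw [Finset.sum_const, Finset.card_univ, Fintype.card_fin]; push_cast; ring
  -- pigeonhole
  have hLK : mr * mr * K = L * M := by
    obtain ⟨kL, hkL⟩ := hdL
    obtain ⟨kM, hkM⟩ := hdM
    rw [hK, hkL, hkM, Int.mul_ediv_cancel_left _ (by omega), Int.mul_ediv_cancel_left _ (by omega)]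
    ring
  have hScard : (S.card : ℤ) = mr * mr := by
    rw [hS, Finset.card_product, Int.card_Ico]
    push_cast [Int.toNat_of_nonneg (show (0:ℤ) ≤ mr - 0 by omega)]
    ring
  have hsumlt : ∑ ab ∈ S, 2 * ((D.image (regionIdxT L M mr ab.1 ab.2)).card : ℤ)
      < ∑ ab ∈ S, K := by
    rw [Finset.sum_const, nsmul_eq_mul]
    have h1 : ∑ ab ∈ S, 2 * ((D.image (regionIdxT L M mr ab.1 ab.2)).card : ℤ)
        ≤ 2 * ((Bblk : ℤ) * (mr + mn - 1) ^ 2) := by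
      rw [← Finset.mul_sum]
      linarith [hbound]
    have h2 : (S.card : ℤ) * K = L * M := by rw [hScard]; linarith [hLK]
    rw [h2]
    linarith [harith]
  obtain ⟨ab, habS, hab⟩ := Finset.exists_lt_of_sum_lt hsumlt
  obtain ⟨a, b⟩ := ab
  rw [hS, Finset.mem_product, Finset.mem_Ico, Finset.mem_Ico] at habS
  obtain ⟨⟨ha0, ham⟩, hb0, hbm⟩ := habS
  refine ⟨a, b, ha0, ham, hb0, hbm, ?_⟩
  -- final counting for the chosen shift
  set img := (nation L M).image (regionIdxT L M mr a b) with himg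
  set touched := D.image (regionIdxT L M mr a b) with htouched
  have hKimg : (img.card : ℤ) = K := by
    rw [himg, image_nation L M mr a b hL hM hmr hdL hdM, Finset.card_product,
      Int.card_Ico, Int.card_Ico, hK]
    have h1 : (0:ℤ) ≤ L / mr := Int.ediv_nonneg (by omega) (by omega)
    have h2 : (0:ℤ) ≤ M / mr := Int.ediv_nonneg (by omega) (by omega)
    push_cast [Int.toNat_of_nonneg (by omega : (0:ℤ) ≤ L / mr - 0),
      Int.toNat_of_nonneg (by omega : (0:ℤ) ≤ M / mr - 0)]
    ring
  have hsubwins : img \ touched ⊆ img.filter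
      (fun r => votesIn L M mr a b v' r false < votesIn L M mr a b v' r true) := by
    intro r hr
    rw [Finset.mem_sdiff] at hr
    obtain ⟨hri, hrt⟩ := hr
    rw [Finset.mem_filter]
    refine ⟨hri, ?_⟩
    have hsame : ∀ c, votesIn L M mr a b v' r c = votesIn L M mr a b v r c := by
      intro c
      unfold votesIn
      congr 1
      apply Finset.filter_congr
      intro p hp
      have hv : regionIdxT L M mr a b p = r → v' p = v p := by
        intro hpr
        by_contra hne
        exact hrt (Finset.mem_image.mpr ⟨p, hdiff p hne, hpr⟩)
      constructor
      · rintro ⟨h1, h2⟩; exact ⟨h1, by rw [← hv h1]; exact h2⟩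
      · rintro ⟨h1, h2⟩; exact ⟨h1, by rw [hv h1]; exact h2⟩
    rw [hsame true, hsame false]
    exact hAwins a b ha0 ham hb0 hbm r hri
  have h1 : img.card - touched.card ≤ (img.filter
      (fun r => votesIn L M mr a b v' r false < votesIn L M mr a b v' r true)).card :=
    le_trans (Finset.le_card_sdiff _ _) (Finset.card_le_card hsubwins)
  have h2 : 2 * (touched.card : ℤ) < (img.card : ℤ) := by
    rw [hKimg]; exact hab
  omega
end

section
/- Let 1 ≤ m_n ≤ m_r and fix a block position (u,v) ∈ ℤ². Among the m_r² shifts (a,b) ∈ {0,…,m_r−1}², exactly (m_n − 1)² are such that the m_n × m_n noise-concentrated block at (u,v) attains exactly 4 distinct region indices under offset (a,b), exactly 2(m_n − 1)(m_r − m_n + 1) are such that it attains exactly 2 distinct region indices, and exactly (m_r − m_n + 1)² are such that it attains exactly 1 region index. -/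
section aux

variable {mr mn : ℤ}

/-- Image of an interval of length `mn ≤ mr` under floor division by `mr` is an `Icc`. -/
lemma image_ediv_eq (hmn : 1 ≤ mn) (hle : mn ≤ mr) (c : ℤ) :
    (Finset.Ico c (c + mn)).image (fun x => x / mr) =
      Finset.Icc (c / mr) ((c + mn - 1) / mr) := by
  have hmr : 0 < mr := lt_of_lt_of_le (by omega) hle
  have key : (c + mn - 1) / mr ≤ c / mr + 1 := by
    have h1 : (c + mn - 1) / mr ≤ (c + 1 * mr) / mr :=
      Int.ediv_le_ediv hmr (by omega)
    rwa [Int.add_mul_ediv_right _ _ hmr.ne'] at h1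
  have key2 : c / mr ≤ (c + mn - 1) / mr := Int.ediv_le_ediv hmr (by omega)
  ext d
  simp only [Finset.mem_image, Finset.mem_Ico, Finset.mem_Icc]
  constructor
  · rintro ⟨x, ⟨hx1, hx2⟩, rfl⟩
    exact ⟨Int.ediv_le_ediv hmr hx1, Int.ediv_le_ediv hmr (by omega)⟩
  · rintro ⟨h1, h2⟩
    have : d = c / mr ∨ d = (c + mn - 1) / mr := by omega
    rcases this with rfl | rfl
    · exact ⟨c, ⟨le_refl _, by omega⟩, rfl⟩
    · exact ⟨c + mn - 1, ⟨by omega, by omega⟩, rfl⟩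

lemma ediv_diff (hmn : 1 ≤ mn) (hle : mn ≤ mr) (c : ℤ) :
    (c + mn - 1) / mr = c / mr + (if c % mr ≤ mr - mn then 0 else 1) := by
  have hmr : 0 < mr := lt_of_lt_of_le (by omega) hle
  have hr0 : 0 ≤ c % mr := Int.emod_nonneg _ hmr.ne'
  have hr1 : c % mr < mr := Int.emod_lt_of_pos _ hmr
  have hc : c % mr + mr * (c / mr) = c := Int.emod_add_mul_ediv _ _
  have h1 : c + mn - 1 = (c % mr + mn - 1) + (c / mr) * mr := by
    rw [mul_comm]; omega
  rw [h1, Int.add_mul_ediv_right _ _ hmr.ne']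
  split_ifs with h
  · rw [Int.ediv_eq_zero_of_lt (by omega) (by omega)]; omega
  · have h2 : c % mr + mn - 1 = (c % mr + mn - 1 - mr) + 1 * mr := by ring
    rw [h2, Int.add_mul_ediv_right _ _ hmr.ne',
      Int.ediv_eq_zero_of_lt (by omega) (by omega)]
    omega

/-- 1D image cardinality. -/
lemma card_image_1d (hmn : 1 ≤ mn) (hle : mn ≤ mr) (a c : ℤ) :
    ((Finset.Ico c (c + mn)).image (fun x => (x - a).fdiv mr)).card =
      if (c - a) % mr ≤ mr - mn then 1 else 2 := by
  have hmr : 0 < mr := lt_of_lt_of_le (by omega) hle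
  have h0 : (fun x : ℤ => (x - a).fdiv mr) = (fun x => x / mr) ∘ (fun x => x + (-a)) := by
    funext x; simp [Int.fdiv_eq_ediv_of_nonneg _ hmr.le, sub_eq_add_neg]
  rw [h0, ← Finset.image_image, Finset.image_add_right_Ico]
  have h1 : c + mn + -a = (c + -a) + mn := by ring
  rw [h1, image_ediv_eq hmn hle, Int.card_Icc, ediv_diff hmn hle]
  have h2 : c + -a = c - a := by ring
  rw [h2]
  split_ifs <;> omega

/-- 2D image as a product of 1D images. -/
lemma image_regionIdx (mr mn a b u v : ℤ) :
    (noiseBlock mn u v).image (regionIdx mr a b) =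
      ((Finset.Ico u (u + mn)).image (fun x => (x - a).fdiv mr)) ×ˢ
      ((Finset.Ico v (v + mn)).image (fun y => (y - b).fdiv mr)) := by
  ext ⟨d, e⟩
  simp only [noiseBlock, regionIdx, Finset.mem_image, Finset.mem_product, Finset.mem_Ico,
    Prod.mk.injEq, Prod.exists]
  constructor
  · rintro ⟨x, y, ⟨hx, hy⟩, h1, h2⟩
    exact ⟨⟨x, hx, h1⟩, ⟨y, hy, h2⟩⟩
  · rintro ⟨⟨x, hx, h1⟩, ⟨y, hy, h2⟩⟩
    exact ⟨x, y, ⟨hx, hy⟩, h1, h2⟩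

/-- 1D shift counting: offsets keeping the interval in one region. -/
lemma count_1d (hmn : 1 ≤ mn) (hle : mn ≤ mr) (c : ℤ) :
    ((Finset.Ico (0 : ℤ) mr).filter (fun a => (c - a) % mr ≤ mr - mn)).card =
      (mr - mn + 1).toNat := by
  have hmr : 0 < mr := lt_of_lt_of_le (by omega) hle
  have h : ((Finset.Ico (0 : ℤ) mr).filter (fun a => (c - a) % mr ≤ mr - mn)).card =
      (Finset.Ico (0 : ℤ) (mr - mn + 1)).card := by
    apply Finset.card_bij (fun a _ => (c - a) % mr)
    · intro a ha
      simp only [Finset.mem_filter, Finset.mem_Ico] at ha ⊢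
      exact ⟨Int.emod_nonneg _ hmr.ne', by omega⟩
    · intro a₁ ha₁ a₂ ha₂ h
      simp only [Finset.mem_filter, Finset.mem_Ico] at ha₁ ha₂
      have hd : mr ∣ (c - a₂) - (c - a₁) := Int.ModEq.dvd h
      have := Int.eq_zero_of_abs_lt_dvd hd (by rw [abs_lt]; constructor <;> omega)
      omega
    · intro r hr
      simp only [Finset.mem_Ico] at hr
      have hkey : (c - (c - r) % mr) % mr = r := by
        rw [Int.sub_emod, Int.emod_emod_of_dvd _ dvd_rfl, ← Int.sub_emod]
        simp only [sub_sub_cancel]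
        exact Int.emod_eq_of_lt (by omega) (by omega)
      refine ⟨(c - r) % mr, ?_, hkey⟩
      simp only [Finset.mem_filter, Finset.mem_Ico]
      exact ⟨⟨Int.emod_nonneg _ hmr.ne', Int.emod_lt_of_pos _ hmr⟩, by rw [hkey]; omega⟩
  rw [h, Int.card_Ico]
  congr 1; omega

lemma count_1d_not (hmn : 1 ≤ mn) (hle : mn ≤ mr) (c : ℤ) :
    ((Finset.Ico (0 : ℤ) mr).filter (fun a => ¬ ((c - a) % mr ≤ mr - mn))).card =
      (mn - 1).toNat := by
  have h := Finset.card_filter_add_card_filter_not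
    (s := Finset.Ico (0 : ℤ) mr) (fun a => (c - a) % mr ≤ mr - mn)
  rw [count_1d hmn hle c, Int.card_Ico] at h
  omega

end aux

/-- Case counting in the proof of Theorem 2 for `m_n ≤ m_r`: among the `m_r²` shifts
`(a,b) ∈ {0,…,m_r−1}²`, exactly `(m_n−1)²` cut the `m_n × m_n` block into 4 regions,
exactly `2(m_n−1)(m_r−m_n+1)` cut it into 2 regions, and exactly `(m_r−m_n+1)²` leave it
inside a single region. -/
theorem shift_case_counting (mr mn : ℤ) (hmn : 1 ≤ mn) (hle : mn ≤ mr) (u v : ℤ) :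
    ((((Finset.Ico (0 : ℤ) mr ×ˢ Finset.Ico (0 : ℤ) mr).filter
        (fun ab => ((noiseBlock mn u v).image (regionIdx mr ab.1 ab.2)).card = 4)).card : ℤ)
      = (mn - 1) ^ 2) ∧
    ((((Finset.Ico (0 : ℤ) mr ×ˢ Finset.Ico (0 : ℤ) mr).filter
        (fun ab => ((noiseBlock mn u v).image (regionIdx mr ab.1 ab.2)).card = 2)).card : ℤ)
      = 2 * (mn - 1) * (mr - mn + 1)) ∧
    ((((Finset.Ico (0 : ℤ) mr ×ˢ Finset.Ico (0 : ℤ) mr).filter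
        (fun ab => ((noiseBlock mn u v).image (regionIdx mr ab.1 ab.2)).card = 1)).card : ℤ)
      = (mr - mn + 1) ^ 2) := by
  have hcard : ∀ a b : ℤ, ((noiseBlock mn u v).image (regionIdx mr a b)).card =
      (if (u - a) % mr ≤ mr - mn then 1 else 2) *
      (if (v - b) % mr ≤ mr - mn then 1 else 2) := by
    intro a b
    rw [image_regionIdx, Finset.card_product, card_image_1d hmn hle, card_image_1d hmn hle]
  have hP1 := count_1d hmn hle u
  have hP2 := count_1d_not hmn hle u
  have hQ1 := count_1d hmn hle v
  have hQ2 := count_1d_not hmn hle v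
  refine ⟨?_, ?_, ?_⟩
  · -- 4 regions: ¬P ∧ ¬Q
    have h4 : (Finset.Ico (0 : ℤ) mr ×ˢ Finset.Ico (0 : ℤ) mr).filter
        (fun ab => ((noiseBlock mn u v).image (regionIdx mr ab.1 ab.2)).card = 4) =
        ((Finset.Ico (0 : ℤ) mr).filter (fun a => ¬ ((u - a) % mr ≤ mr - mn))) ×ˢ
        ((Finset.Ico (0 : ℤ) mr).filter (fun b => ¬ ((v - b) % mr ≤ mr - mn))) := by
      rw [← Finset.filter_product]
      apply Finset.filter_congr
      intro ab _
      rw [hcard ab.1 ab.2]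
      split_ifs <;> simp_all
    rw [h4, Finset.card_product, hP2, hQ2]
    push_cast [Int.toNat_of_nonneg (by omega : (0:ℤ) ≤ mn - 1)]
    ring
  · -- 2 regions: (P ∧ ¬Q) ∨ (¬P ∧ Q)
    have h2 : (Finset.Ico (0 : ℤ) mr ×ˢ Finset.Ico (0 : ℤ) mr).filter
        (fun ab => ((noiseBlock mn u v).image (regionIdx mr ab.1 ab.2)).card = 2) =
        (((Finset.Ico (0 : ℤ) mr).filter (fun a => (u - a) % mr ≤ mr - mn)) ×ˢ
         ((Finset.Ico (0 : ℤ) mr).filter (fun b => ¬ ((v - b) % mr ≤ mr - mn)))) ∪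
        (((Finset.Ico (0 : ℤ) mr).filter (fun a => ¬ ((u - a) % mr ≤ mr - mn))) ×ˢ
         ((Finset.Ico (0 : ℤ) mr).filter (fun b => (v - b) % mr ≤ mr - mn))) := by
      rw [← Finset.filter_product, ← Finset.filter_product, ← Finset.filter_or]
      apply Finset.filter_congr
      intro ab _
      rw [hcard ab.1 ab.2]
      split_ifs <;> simp_all
    have hdisj : Disjoint
        (((Finset.Ico (0 : ℤ) mr).filter (fun a => (u - a) % mr ≤ mr - mn)) ×ˢ
         ((Finset.Ico (0 : ℤ) mr).filter (fun b => ¬ ((v - b) % mr ≤ mr - mn))))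
        (((Finset.Ico (0 : ℤ) mr).filter (fun a => ¬ ((u - a) % mr ≤ mr - mn))) ×ˢ
         ((Finset.Ico (0 : ℤ) mr).filter (fun b => (v - b) % mr ≤ mr - mn))) := by
      rw [Finset.disjoint_left]
      intro ab hab1 hab2
      simp only [Finset.mem_product, Finset.mem_filter] at hab1 hab2
      exact hab2.1.2 hab1.1.2
    rw [h2, Finset.card_union_of_disjoint hdisj, Finset.card_product, Finset.card_product,
      hP1, hP2, hQ1, hQ2]
    push_cast [Int.toNat_of_nonneg (by omega : (0:ℤ) ≤ mn - 1),
      Int.toNat_of_nonneg (by omega : (0:ℤ) ≤ mr - mn + 1)]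
    ring
  · -- 1 region: P ∧ Q
    have h1 : (Finset.Ico (0 : ℤ) mr ×ˢ Finset.Ico (0 : ℤ) mr).filter
        (fun ab => ((noiseBlock mn u v).image (regionIdx mr ab.1 ab.2)).card = 1) =
        ((Finset.Ico (0 : ℤ) mr).filter (fun a => (u - a) % mr ≤ mr - mn)) ×ˢ
        ((Finset.Ico (0 : ℤ) mr).filter (fun b => (v - b) % mr ≤ mr - mn)) := by
      rw [← Finset.filter_product]
      apply Finset.filter_congr
      intro ab _
      rw [hcard ab.1 ab.2]
      split_ifs <;> simp_all
    rw [h1, Finset.card_product, hP1, hQ1]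
    push_cast [Int.toNat_of_nonneg (by omega : (0:ℤ) ≤ mr - mn + 1)]
    ring
end

section
/- For all integers m ≥ 1, n ≥ 1 and any s ∈ ℤ, the sum over a from 0 to m − 1 of the number of distinct values of ⌊(x − a)/m⌋, as x ranges over the n consecutive integers s, s+1, …, s+n−1, equals n + m − 1. -/
open Finset

lemma emod_sum' (m u : ℤ) (hm : 0 < m) :
    (∑ b ∈ Ico u (u + m), b % m) = ∑ r ∈ Ico (0:ℤ) m, r := by
  refine Finset.sum_nbij' (fun b => b % m) (fun r => u + (r - u) % m) ?_ ?_ ?_ ?_ ?_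
  · intro b hb
    simp only [mem_Ico]
    exact ⟨Int.emod_nonneg b hm.ne', Int.emod_lt_of_pos b hm⟩
  · intro r hr
    simp only [mem_Ico]
    constructor
    · linarith [Int.emod_nonneg (r - u) hm.ne']
    · linarith [Int.emod_lt_of_pos (r - u) hm]
  · intro b hb
    simp only [mem_Ico] at hb
    have h1 : (b % m - u) % m = (b - u) % m := by
      rw [Int.sub_emod, Int.emod_emod_of_dvd b dvd_rfl, ← Int.sub_emod]
    have h2 : (b - u) % m = b - u := Int.emod_eq_of_lt (by linarith) (by linarith)
    simp only [h1, h2]; ring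
  · intro r hr
    simp only [mem_Ico] at hr
    show (u + (r - u) % m) % m = r
    have h1 : (u + (r - u) % m) % m = (u + (r - u)) % m := by
      rw [Int.add_emod, Int.emod_emod_of_dvd (r - u) dvd_rfl, ← Int.add_emod]
    have : u + (r - u) = r := by ring
    rw [h1, this, Int.emod_eq_of_lt hr.1 hr.2]
  · intro b hb; rfl

lemma ediv_sum' (m u : ℤ) (hm : 0 < m) :
    (∑ b ∈ Ico u (u + m), b / m) = u := by
  have hcast : ((Finset.Ico (0:ℤ) m).card : ℤ) = m := by
    rw [Int.card_Ico]; simp [Int.toNat_of_nonneg hm.le]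
  have hsum : (∑ b ∈ Ico u (u + m), b) = m * u + ∑ r ∈ Ico (0:ℤ) m, r := by
    have hmap : Finset.Ico u (u + m) = Finset.map (addLeftEmbedding u) (Finset.Ico (0:ℤ) m) := by
      rw [Finset.map_add_left_Ico, add_zero]
    rw [hmap, Finset.sum_map]
    simp only [addLeftEmbedding_apply]
    rw [Finset.sum_add_distrib, Finset.sum_const, nsmul_eq_mul, hcast]
  have key : m * (∑ b ∈ Ico u (u + m), b / m) = m * u := by
    rw [Finset.mul_sum]
    have h : ∀ b : ℤ, m * (b / m) = b - b % m := fun b => by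
      have := Int.mul_ediv_add_emod b m; linarith
    calc (∑ b ∈ Ico u (u+m), m * (b/m)) = ∑ b ∈ Ico u (u+m), (b - b % m) := by
          simp only [h]
      _ = (∑ b ∈ Ico u (u+m), b) - ∑ b ∈ Ico u (u+m), b % m := Finset.sum_sub_distrib _ _
      _ = m * u := by rw [emod_sum' m u hm, hsum]; ring
  exact mul_left_cancel₀ hm.ne' key

lemma shift_ediv_sum (m t : ℤ) (hm : 0 < m) :
    (∑ a ∈ Ico (0:ℤ) m, (t - a) / m) = t - m + 1 := by
  have : (∑ a ∈ Ico (0:ℤ) m, (t - a) / m)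
      = ∑ b ∈ Ico (t - m + 1) (t - m + 1 + m), b / m := by
    refine Finset.sum_nbij' (fun a => t - a) (fun b => t - b) ?_ ?_ ?_ ?_ ?_
    · intro a ha; simp only [mem_Ico] at *; constructor <;> linarith [ha.1, ha.2]
    · intro b hb; simp only [mem_Ico] at *; constructor <;> linarith [hb.1, hb.2]
    · intro a _; ring
    · intro b _; ring
    · intro a _; rfl
  rw [this, ediv_sum' m _ hm]

lemma image_fdiv_eq (m : ℤ) (hm : 0 < m) (n : ℤ) (hn : 1 ≤ n) (s a : ℤ) :
    (Finset.Ico s (s + n)).image (fun x => (x - a).fdiv m)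
      = Finset.Icc ((s - a) / m) ((s + n - 1 - a) / m) := by
  ext k
  simp only [Finset.mem_image, Finset.mem_Icc, Finset.mem_Ico]
  constructor
  · rintro ⟨x, ⟨hx1, hx2⟩, rfl⟩
    rw [Int.fdiv_eq_ediv_of_nonneg _ hm.le]
    exact ⟨Int.ediv_le_ediv hm (by linarith), Int.ediv_le_ediv hm (by linarith)⟩
  · rintro ⟨h1, h2⟩
    by_cases hc : k * m + a ≤ s
    · refine ⟨s, ⟨le_refl s, by linarith⟩, ?_⟩
      rw [Int.fdiv_eq_ediv_of_nonneg _ hm.le]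
      exact le_antisymm h1 ((Int.le_ediv_iff_mul_le hm).mpr (by linarith))
    · refine ⟨k * m + a, ⟨by linarith, ?_⟩, ?_⟩
      · have : k * m ≤ s + n - 1 - a := (Int.le_ediv_iff_mul_le hm).mp h2
        linarith
      · rw [Int.fdiv_eq_ediv_of_nonneg _ hm.le]
        simp [Int.mul_ediv_cancel _ hm.ne']

/-- One-dimensional shifting lemma underlying the counting claim of Theorem 2: summed over
all `m` shifts `a ∈ {0,…,m−1}` of the partition of `ℤ` into length-`m` intervals, the
interval of `n` consecutive cells `s, s+1, …, s+n−1` meets a total of `n + m − 1` intervals. -/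
theorem sum_over_shifts_interval_regions (m n : ℤ) (hm : 1 ≤ m) (hn : 1 ≤ n) (s : ℤ) :
    (∑ a ∈ Finset.Ico (0 : ℤ) m,
      (((Finset.Ico s (s + n)).image (fun x => (x - a).fdiv m)).card : ℤ))
      = n + m - 1 := by
  have hm0 : 0 < m := hm
  have hcard : ∀ a : ℤ, (((Finset.Ico s (s + n)).image (fun x => (x - a).fdiv m)).card : ℤ)
      = (s + n - 1 - a) / m - (s - a) / m + 1 := by
    intro a
    rw [image_fdiv_eq m hm0 n hn s a, Int.card_Icc]
    have hle : (s - a) / m ≤ (s + n - 1 - a) / m := Int.ediv_le_ediv hm0 (by linarith)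
    rw [Int.toNat_of_nonneg (by linarith)]
    ring
  have hcast : ((Finset.Ico (0:ℤ) m).card : ℤ) = m := by
    rw [Int.card_Ico]; simp [Int.toNat_of_nonneg hm0.le]
  calc (∑ a ∈ Finset.Ico (0 : ℤ) m,
      (((Finset.Ico s (s + n)).image (fun x => (x - a).fdiv m)).card : ℤ))
      = ∑ a ∈ Finset.Ico (0:ℤ) m, ((s + n - 1 - a) / m - (s - a) / m + 1) := by
        exact Finset.sum_congr rfl (fun a _ => hcard a)
    _ = (∑ a ∈ Finset.Ico (0:ℤ) m, (s + n - 1 - a) / m)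
        - (∑ a ∈ Finset.Ico (0:ℤ) m, (s - a) / m) + m := by
        rw [Finset.sum_add_distrib, Finset.sum_sub_distrib, Finset.sum_const, nsmul_eq_mul,
          hcast, mul_one]
    _ = n + m - 1 := by
        rw [shift_ediv_sum m _ hm0, shift_ediv_sum m _ hm0]; ring
end
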